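/- Let (V, g) be a real inner product space of dimension 2n (n ≥ 1). The assignment I ↦ V_I^{1,0} is a bijection from the set of complex structures I on V that are g-isometries (g(Ix, Iy) = g(x, y) for all x, y ∈ V) onto the set of n-dimensional isotropic complex subspaces of V_ℂ. -/

import Mathlib

open TensorProduct

noncomputable section Aux1

variable (V : Type*) [AddCommGroup V] [Module ℝ V]

/-- real part of a complexified vector -/
noncomputable def reT : ℂ ⊗[ℝ] V →ₗ[ℝ] V :=
  TensorProduct.lift ((LinearMap.lsmul ℝ V).comp Complex.reLm)

noncomputable def imT : ℂ ⊗[ℝ] V →ₗ[ℝ] V :=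
  TensorProduct.lift ((LinearMap.lsmul ℝ V).comp Complex.imLm)

variable {V}

@[simp] lemma reT_tmul (z : ℂ) (v : V) : reT V (z ⊗ₜ v) = z.re • v := rfl
@[simp] lemma imT_tmul (z : ℂ) (v : V) : imT V (z ⊗ₜ v) = z.im • v := rfl

lemma decompT (w : ℂ ⊗[ℝ] V) :
    (1:ℂ) ⊗ₜ[ℝ] (reT V w) + Complex.I • ((1:ℂ) ⊗ₜ[ℝ] (imT V w)) = w := by
  induction w using TensorProduct.induction_on with
  | zero => simp
  | tmul z v =>
      simp only [reT_tmul, imT_tmul, smul_tmul']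
      rw [← smul_tmul, ← smul_tmul, ← add_tmul]
      congr 1
      apply Complex.ext <;> simp
  | add x y hx hy =>
      simp only [map_add, tmul_add, smul_add]
      conv_rhs => rw [← hx, ← hy]
      abel

lemma reT_I_smul (w : ℂ ⊗[ℝ] V) : reT V (Complex.I • w) = - imT V w := by
  induction w using TensorProduct.induction_on with
  | zero => simp
  | tmul z v =>
      rw [show Complex.I • (z ⊗ₜ[ℝ] v) = (Complex.I * z) ⊗ₜ[ℝ] v from smul_tmul' _ _ _]
      simp
  | add x y hx hy => rw [smul_add, map_add, map_add, hx, hy, neg_add]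

lemma imT_I_smul (w : ℂ ⊗[ℝ] V) : imT V (Complex.I • w) = reT V w := by
  induction w using TensorProduct.induction_on with
  | zero => simp
  | tmul z v =>
      rw [show Complex.I • (z ⊗ₜ[ℝ] v) = (Complex.I * z) ⊗ₜ[ℝ] v from smul_tmul' _ _ _]
      simp
  | add x y hx hy => rw [smul_add, map_add, map_add, hx, hy]

@[simp] lemma reT_mk (a b : V) :
    reT V ((1:ℂ) ⊗ₜ[ℝ] a + Complex.I • ((1:ℂ) ⊗ₜ[ℝ] b)) = a := by
  rw [map_add, reT_I_smul]; simp

@[simp] lemma imT_mk (a b : V) :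
    imT V ((1:ℂ) ⊗ₜ[ℝ] a + Complex.I • ((1:ℂ) ⊗ₜ[ℝ] b)) = b := by
  rw [map_add, imT_I_smul]; simp

end Aux1
noncomputable section Aux2

variable {V : Type*} [AddCommGroup V] [Module ℝ V]

lemma uniqT {a b c d : V}
    (h : (1:ℂ) ⊗ₜ[ℝ] a + Complex.I • ((1:ℂ) ⊗ₜ[ℝ] b)
        = (1:ℂ) ⊗ₜ[ℝ] c + Complex.I • ((1:ℂ) ⊗ₜ[ℝ] d)) : a = c ∧ b = d := by
  constructor
  · have := congrArg (reT V) h; simpa using this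
  · have := congrArg (imT V) h; simpa using this

lemma baseChange_apply (I : Module.End ℝ V) (w : ℂ ⊗[ℝ] V) :
    I.baseChange ℂ w = (1:ℂ) ⊗ₜ[ℝ] (I (reT V w))
      + Complex.I • ((1:ℂ) ⊗ₜ[ℝ] (I (imT V w))) := by
  conv_lhs => rw [← decompT w]
  rw [map_add, map_smul]
  simp [LinearMap.baseChange_tmul]

lemma smul_I_apply (w : ℂ ⊗[ℝ] V) :
    Complex.I • w = (1:ℂ) ⊗ₜ[ℝ] (-(imT V w))
      + Complex.I • ((1:ℂ) ⊗ₜ[ℝ] (reT V w)) := by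
  conv_lhs => rw [← decompT w]
  rw [smul_add, smul_smul, Complex.I_mul_I, neg_one_smul]
  rw [show -((1:ℂ) ⊗ₜ[ℝ] (imT V w)) = (1:ℂ) ⊗ₜ[ℝ] (-(imT V w)) by rw [tmul_neg]]
  abel

lemma mem_eig_iff {I : Module.End ℝ V} (hI : ∀ v, I (I v) = -v) (w : ℂ ⊗[ℝ] V) :
    w ∈ Module.End.eigenspace (I.baseChange ℂ) Complex.I ↔
      imT V w = - I (reT V w) := by
  rw [Module.End.mem_eigenspace_iff, smul_I_apply w, baseChange_apply I w]
  constructor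
  · intro h
    have := (uniqT h).1
    rw [this, neg_neg]
  · intro h
    have h1 : I (reT V w) = -(imT V w) := by rw [h, neg_neg]
    have h2 : I (imT V w) = reT V w := by rw [h, map_neg, hI, neg_neg]
    rw [h1, h2]

end Aux2
noncomputable section Aux3

variable {V : Type*} [NormedAddCommGroup V] [InnerProductSpace ℝ V]

lemma B_mk (a b c d : V) :
    (LinearMap.BilinForm.baseChange ℂ (innerₗ V))
      ((1:ℂ) ⊗ₜ[ℝ] a + Complex.I • ((1:ℂ) ⊗ₜ[ℝ] b))
      ((1:ℂ) ⊗ₜ[ℝ] c + Complex.I • ((1:ℂ) ⊗ₜ[ℝ] d))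
    = (((inner ℝ a c : ℝ) - (inner ℝ b d : ℝ) : ℝ) : ℂ)
      + (((inner ℝ a d : ℝ) + (inner ℝ b c : ℝ) : ℝ) : ℂ) * Complex.I := by
  simp only [map_add, LinearMap.map_smul, LinearMap.add_apply, LinearMap.smul_apply,
    LinearMap.BilinForm.baseChange_tmul, innerₗ_apply_apply]
  simp only [smul_eq_mul, Complex.real_smul, mul_one]
  push_cast
  ring_nf
  rw [Complex.I_sq]
  ring

lemma dim_helper [FiniteDimensional ℝ V] (E : Submodule ℂ (ℂ ⊗[ℝ] V))
    (hinj : ∀ w ∈ E, reT V w = 0 → w = 0)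
    (hsurj : ∀ a : V, ∃ w ∈ E, reT V w = a) :
    2 * Module.finrank ℂ E = Module.finrank ℝ V := by
  let f : (E.restrictScalars ℝ) →ₗ[ℝ] V := (reT V) ∘ₗ (E.restrictScalars ℝ).subtype
  have hfi : Function.Injective f := by
    rw [← LinearMap.ker_eq_bot, LinearMap.ker_eq_bot']
    rintro ⟨w, hw⟩ h0
    have : reT V w = 0 := h0
    exact Subtype.ext (hinj w hw this)
  have hfs : Function.Surjective f := by
    intro a
    obtain ⟨w, hw, hwa⟩ := hsurj a
    exact ⟨⟨w, hw⟩, hwa⟩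
  have e1 : Module.finrank ℝ (E.restrictScalars ℝ) = Module.finrank ℝ V :=
    (LinearEquiv.ofBijective f ⟨hfi, hfs⟩).finrank_eq
  have e2 : Module.finrank ℝ (E.restrictScalars ℝ) = Module.finrank ℝ E :=
    ((Submodule.restrictScalarsEquiv ℝ ℂ _ E).restrictScalars ℝ).finrank_eq
  have e3 : Module.finrank ℝ ℂ * Module.finrank ℂ E = Module.finrank ℝ E :=
    Module.finrank_mul_finrank ℝ ℂ E
  rw [Complex.finrank_real_complex] at e3
  omega

end Aux3
/-- `I ↦ V_I^{1,0}` (the `i`-eigenspace of the `ℂ`-linear extension of `I`)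
is a bijection from the set of `g`-isometric complex structures on `V` onto the set of
`n`-dimensional isotropic complex subspaces of the complexification `V_ℂ = ℂ ⊗[ℝ] V`. -/
theorem stmt1 (n : ℕ) (hn : 1 ≤ n) (V : Type*) [NormedAddCommGroup V]
    [InnerProductSpace ℝ V] [FiniteDimensional ℝ V]
    (hdim : Module.finrank ℝ V = 2 * n) :
    Set.BijOn
      (fun I : Module.End ℝ V => Module.End.eigenspace (I.baseChange ℂ) Complex.I)
      {I : Module.End ℝ V | I ∘ₗ I = -LinearMap.id ∧
        ∀ x y : V, inner ℝ (I x) (I y) = (inner ℝ x y : ℝ)}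
      {W : Submodule ℂ (ℂ ⊗[ℝ] V) | Module.finrank ℂ W = n ∧
        ∀ w ∈ W, ∀ w' ∈ W,
          (LinearMap.BilinForm.baseChange ℂ (innerₗ V)) w w' = 0} := by
  classical
  refine ⟨?_, ?_, ?_⟩
  · -- MapsTo
    rintro I ⟨hI2, hIso⟩
    simp only [Set.mem_setOf_eq]
    have hI : ∀ v, I (I v) = -v := fun v => by
      simpa using LinearMap.ext_iff.mp hI2 v
    set E := Module.End.eigenspace (I.baseChange ℂ) Complex.I with hE
    have hinj : ∀ w ∈ E, reT V w = 0 → w = 0 := by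
      intro w hw h0
      rw [hE, mem_eig_iff hI] at hw
      have hd := decompT w
      rw [hw, h0] at hd
      simp only [map_zero, neg_zero, tmul_zero, smul_zero, add_zero] at hd
      exact hd.symm
    have hsurj : ∀ a : V, ∃ w ∈ E, reT V w = a := by
      intro a
      refine ⟨(1:ℂ) ⊗ₜ[ℝ] a + Complex.I • ((1:ℂ) ⊗ₜ[ℝ] (-(I a))), ?_, by simp⟩
      rw [hE, mem_eig_iff hI]
      simp
    constructor
    · have := dim_helper E hinj hsurj
      omega
    · intro w hw w' hw'
      rw [hE, mem_eig_iff hI] at hw hw'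
      have hd : w = (1:ℂ) ⊗ₜ[ℝ] (reT V w)
          + Complex.I • ((1:ℂ) ⊗ₜ[ℝ] (-(I (reT V w)))) := by
        conv_lhs => rw [← decompT w]
        rw [hw]
      have hd' : w' = (1:ℂ) ⊗ₜ[ℝ] (reT V w')
          + Complex.I • ((1:ℂ) ⊗ₜ[ℝ] (-(I (reT V w')))) := by
        conv_lhs => rw [← decompT w']
        rw [hw']
      rw [hd, hd', B_mk]
      set a := reT V w
      set c := reT V w'
      have h1 : (inner ℝ (I a) (I c) : ℝ) = inner ℝ a c := hIso a c
      have h2 : (inner ℝ a (I c) : ℝ) = - inner ℝ (I a) c := by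
        rw [← hIso a (I c), hI, inner_neg_right]
      simp [inner_neg_left, inner_neg_right, inner_neg_neg, h1, h2]
  · -- InjOn
    rintro I ⟨hI2, -⟩ J ⟨hJ2, -⟩ hEq
    have hI : ∀ v, I (I v) = -v := fun v => by
      simpa using LinearMap.ext_iff.mp hI2 v
    have hJ : ∀ v, J (J v) = -v := fun v => by
      simpa using LinearMap.ext_iff.mp hJ2 v
    ext v
    have hv : (1:ℂ) ⊗ₜ[ℝ] v + Complex.I • ((1:ℂ) ⊗ₜ[ℝ] (-(I v)))
        ∈ Module.End.eigenspace (I.baseChange ℂ) Complex.I := by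
      rw [mem_eig_iff hI]; simp
    rw [show Module.End.eigenspace (I.baseChange ℂ) Complex.I
        = Module.End.eigenspace (J.baseChange ℂ) Complex.I from hEq] at hv
    rw [mem_eig_iff hJ] at hv
    simp only [reT_mk, imT_mk] at hv
    exact neg_injective hv
  · -- SurjOn
    intro W hW
    obtain ⟨hWn, hWiso⟩ := hW
    have e2 : Module.finrank ℝ (W.restrictScalars ℝ) = Module.finrank ℝ W :=
      ((Submodule.restrictScalarsEquiv ℝ ℂ _ W).restrictScalars ℝ).finrank_eq
    have e3 : Module.finrank ℝ ℂ * Module.finrank ℂ W = Module.finrank ℝ W :=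
      Module.finrank_mul_finrank ℝ ℂ W
    rw [Complex.finrank_real_complex] at e3
    have hWr : Module.finrank ℝ (W.restrictScalars ℝ) = 2 * n := by omega
    set f : (W.restrictScalars ℝ) →ₗ[ℝ] V := (reT V) ∘ₗ (W.restrictScalars ℝ).subtype with hf
    have hfi : Function.Injective f := by
      rw [← LinearMap.ker_eq_bot, LinearMap.ker_eq_bot']
      rintro ⟨w, hw⟩ h0
      have h0' : reT V w = 0 := h0
      have hmemW : w ∈ W := hw
      have hd := decompT w
      rw [h0', tmul_zero, zero_add] at hd
      have hsm : (-Complex.I) • w ∈ W := W.smul_mem _ hmemW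
      rw [← hd, smul_smul, neg_mul, Complex.I_mul_I, neg_neg, one_smul] at hsm
      have hzero := hWiso _ hsm _ hsm
      rw [LinearMap.BilinForm.baseChange_tmul] at hzero
      simp only [innerₗ_apply_apply, mul_one, Complex.real_smul,
        Complex.ofReal_eq_zero] at hzero
      have hb0 : imT V w = 0 := inner_self_eq_zero.mp hzero
      apply Subtype.ext
      show w = 0
      rw [← hd, hb0, tmul_zero, smul_zero]
    have hfs : Function.Surjective f :=
      (LinearMap.injective_iff_surjective_of_finrank_eq_finrank
        (by rw [hWr, hdim])).mp hfi
    let e : (W.restrictScalars ℝ) ≃ₗ[ℝ] V := LinearEquiv.ofBijective f ⟨hfi, hfs⟩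
    set I : Module.End ℝ V :=
      -((imT V) ∘ₗ ((W.restrictScalars ℝ).subtype ∘ₗ e.symm.toLinearMap)) with hIdef
    have keyI : ∀ v : V, I v = - imT V ((e.symm v : ℂ ⊗[ℝ] V)) := fun v => rfl
    have keyRe : ∀ v : V, reT V ((e.symm v : ℂ ⊗[ℝ] V)) = v := fun v =>
      e.apply_symm_apply v
    have memW : ∀ v : V, ((e.symm v : ℂ ⊗[ℝ] V)) ∈ W := fun v => (e.symm v).2
    have hdec : ∀ v : V, ((e.symm v : ℂ ⊗[ℝ] V))
        = (1:ℂ) ⊗ₜ[ℝ] v + Complex.I • ((1:ℂ) ⊗ₜ[ℝ] (-(I v))) := by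
      intro v
      conv_lhs => rw [← decompT ((e.symm v : ℂ ⊗[ℝ] V))]
      rw [keyRe, keyI, neg_neg]
    have uniqW : ∀ u, u ∈ W → ((e.symm (reT V u) : ℂ ⊗[ℝ] V)) = u := by
      intro u hu
      have h : e ⟨u, hu⟩ = reT V u := rfl
      rw [← h, e.symm_apply_apply]
    have hI : ∀ v, I (I v) = -v := by
      intro v
      have h1 : (Complex.I • ((e.symm v : ℂ ⊗[ℝ] V))) ∈ W := W.smul_mem _ (memW v)
      have h2 : reT V (Complex.I • ((e.symm v : ℂ ⊗[ℝ] V))) = I v := by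
        rw [reT_I_smul, ← keyI]
      have h3 : ((e.symm (I v) : ℂ ⊗[ℝ] V)) = Complex.I • ((e.symm v : ℂ ⊗[ℝ] V)) := by
        conv_lhs => rw [← h2]
        exact uniqW _ h1
      rw [keyI, h3, imT_I_smul, keyRe]
    have hIso : ∀ x y : V, (inner ℝ (I x) (I y) : ℝ) = inner ℝ x y := by
      intro x y
      have h0 := hWiso _ (memW x) _ (memW y)
      rw [hdec x, hdec y, B_mk] at h0
      have hre := congrArg Complex.re h0
      simp only [Complex.add_re, Complex.ofReal_re, Complex.mul_re, Complex.I_re,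
        Complex.ofReal_im, Complex.I_im, Complex.zero_re, mul_zero, mul_one,
        zero_mul, zero_sub, sub_zero, neg_zero, add_zero, zero_add] at hre
      simp only [inner_neg_neg] at hre
      linarith [hre]
    have hI2 : I ∘ₗ I = -LinearMap.id := by
      ext v; simpa using hI v
    refine ⟨I, ⟨hI2, hIso⟩, ?_⟩
    simp only
    ext u
    rw [mem_eig_iff hI]
    constructor
    · intro hu
      have hu' : u = ((e.symm (reT V u) : ℂ ⊗[ℝ] V)) := by
        rw [hdec (reT V u)]
        conv_lhs => rw [← decompT u]
        rw [hu]
      rw [hu']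
      exact memW _
    · intro hu
      have h1 := uniqW u hu
      have h2 := hdec (reT V u)
      rw [h1] at h2
      have h3 := congrArg (imT V) h2
      simpa using h3
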